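/- Let {X_{ij} : 1 ≤ i ≤ k, 1 ≤ j ≤ n-k} be the orthonormal basis X_{ij} = (√2/2)·[[0, E_{ij}],[E_{ij}^T, 0]] of the tangent space at diag(I_k, -I_{n-k}), where E_{ij} is the k×(n-k) matrix unit. Then for any tangent vectors X = [[0,X₀],[X₀^T,0]] and Y = [[0,Y₀],[Y₀^T,0]], the sum Σ_{i,j} (1/2)·tr(X_{ij}² X Y - X X_{ij} Y X_{ij}) equals ((n-2)/8)·tr(XY). -/

import Mathlib

open Matrix

private lemma trace_fromBlocks' {p q : Type*} [Fintype p] [Fintype q]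
    (A : Matrix p p ℝ) (B : Matrix p q ℝ) (C : Matrix q p ℝ) (D : Matrix q q ℝ) :
    (Matrix.fromBlocks A B C D).trace = A.trace + D.trace := by
  simp [Matrix.trace, Matrix.diag, Fintype.sum_sum_type]

private lemma stdBasis_transpose {p q : Type*} [DecidableEq p] [DecidableEq q] (a : p) (b : q) :
    (Matrix.single a b (1 : ℝ))ᵀ = Matrix.single b a 1 := by
  ext x y
  simp [Matrix.single, and_comm]

private lemma helper1 {p q : Type*} [Fintype p] [Fintype q] [DecidableEq p] [DecidableEq q]
    (M : Matrix p q ℝ) (a : p) (b : q) :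
    (M * Matrix.single b a (1 : ℝ)).trace = M a b := by
  simp [Matrix.trace, Matrix.diag, Matrix.mul_apply, Matrix.single, ite_and]

private lemma helper2 {p q : Type*} [Fintype p] [Fintype q] [DecidableEq p] [DecidableEq q]
    (M : Matrix p q ℝ) (N : Matrix p q ℝ) (a : p) (b : q) (x : p) (y : q) :
    (M * Matrix.single b a (1 : ℝ) * N) x y = M x b * N a y := by
  simp [Matrix.mul_apply, Matrix.single, ite_and, Finset.sum_mul]

private lemma helper3 {p q r : Type*} [Fintype q] [DecidableEq p] [DecidableEq q]
    (N : Matrix q r ℝ) (a : q) (b : p) (y : r) :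
    (Matrix.single b a (1 : ℝ) * N) b y = N a y := by
  simp [Matrix.mul_apply, Matrix.single, ite_and]

private lemma trace2' (k m : ℕ) (X₀ Y₀ : Matrix (Fin k) (Fin m) ℝ) (i : Fin k) (j : Fin m) :
    ((Matrix.fromBlocks 0 X₀ X₀ᵀ (0 : Matrix (Fin m) (Fin m) ℝ)) *
      (Matrix.fromBlocks 0 (Matrix.single i j (1 : ℝ))
          (Matrix.single i j (1 : ℝ))ᵀ 0) *
      (Matrix.fromBlocks 0 Y₀ Y₀ᵀ 0) *
      (Matrix.fromBlocks 0 (Matrix.single i j (1 : ℝ))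
          (Matrix.single i j (1 : ℝ))ᵀ 0)).trace =
    2 * (X₀ i j * Y₀ i j) := by
  simp only [Matrix.fromBlocks_multiply, trace_fromBlocks', Matrix.mul_zero, Matrix.zero_mul,
    add_zero, zero_add, stdBasis_transpose]
  rw [helper1, helper1, helper2, helper2]
  simp [Matrix.transpose_apply]
  ring

private lemma trace1' (k m : ℕ) (X₀ Y₀ : Matrix (Fin k) (Fin m) ℝ) (i : Fin k) (j : Fin m) :
    ((Matrix.fromBlocks 0 (Matrix.single i j (1 : ℝ))
          (Matrix.single i j (1 : ℝ))ᵀ (0 : Matrix (Fin m) (Fin m) ℝ)) *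
      (Matrix.fromBlocks 0 (Matrix.single i j (1 : ℝ))
          (Matrix.single i j (1 : ℝ))ᵀ 0) *
      (Matrix.fromBlocks 0 X₀ X₀ᵀ 0) *
      (Matrix.fromBlocks 0 Y₀ Y₀ᵀ 0)).trace =
    (X₀ * Y₀ᵀ) i i + (X₀ᵀ * Y₀) j j := by
  simp only [Matrix.fromBlocks_multiply, trace_fromBlocks', Matrix.mul_zero, Matrix.zero_mul,
    add_zero, zero_add, stdBasis_transpose]
  rw [Matrix.mul_assoc _ X₀ Y₀ᵀ, Matrix.mul_assoc _ _ (X₀ * Y₀ᵀ),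
      Matrix.mul_assoc _ X₀ᵀ Y₀, Matrix.mul_assoc _ _ (X₀ᵀ * Y₀),
      Matrix.trace_mul_comm (Matrix.single i j (1:ℝ)),
      Matrix.trace_mul_comm (Matrix.single j i (1:ℝ)),
      helper1, helper1, helper3, helper3]

private lemma sum_helper (k m : ℕ) (a : Fin k → Fin m → ℝ) :
    ∑ i : Fin k, ∑ j : Fin m,
      ((1:ℝ)/4 * ((∑ j' : Fin m, a i j') + (∑ i' : Fin k, a i' j) - 2 * a i j)) =
    (((k : ℝ) + m - 2) / 8) * (2 * ∑ i : Fin k, ∑ j : Fin m, a i j) := by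
  have h1 : ∑ i : Fin k, ∑ j : Fin m, (∑ j' : Fin m, a i j')
      = (m : ℝ) * ∑ i : Fin k, ∑ j : Fin m, a i j := by
    simp [Finset.sum_const, Finset.mul_sum, mul_comm]
  have h2 : ∑ i : Fin k, ∑ j : Fin m, (∑ i' : Fin k, a i' j)
      = (k : ℝ) * ∑ i : Fin k, ∑ j : Fin m, a i j := by
    rw [Finset.sum_comm (γ := Fin k)]
    rw [Finset.sum_comm (s := (Finset.univ : Finset (Fin k)))]
    simp [Finset.sum_const, Finset.mul_sum]
  simp only [mul_sub, mul_add, Finset.sum_sub_distrib, Finset.sum_add_distrib,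
    ← Finset.mul_sum]
  rw [h1, h2]
  ring

theorem ricci_curvature_grassmannian (k m : ℕ)
    (X₀ Y₀ : Matrix (Fin k) (Fin m) ℝ)
    (X Y : Matrix (Fin k ⊕ Fin m) (Fin k ⊕ Fin m) ℝ)
    (hX : X = Matrix.fromBlocks 0 X₀ X₀ᵀ 0)
    (hY : Y = Matrix.fromBlocks 0 Y₀ Y₀ᵀ 0) :
    (∑ i : Fin k, ∑ j : Fin m,
      (1/2 : ℝ) *
        (let Xij : Matrix (Fin k ⊕ Fin m) (Fin k ⊕ Fin m) ℝ :=
          (Real.sqrt 2 / 2) •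
            Matrix.fromBlocks 0 (Matrix.single i j (1 : ℝ))
              (Matrix.single i j (1 : ℝ))ᵀ 0
        (Xij * Xij * X * Y - X * Xij * Y * Xij).trace)) =
      (((k : ℝ) + m - 2) / 8) * (X * Y).trace := by
  subst hX hY
  have hc : (Real.sqrt 2 / 2 : ℝ) * (Real.sqrt 2 / 2) = 1/2 := by
    rw [div_mul_div_comm, Real.mul_self_sqrt (by norm_num : (0:ℝ) ≤ 2)]
    norm_num
  have hRHS : ((Matrix.fromBlocks 0 X₀ X₀ᵀ (0 : Matrix (Fin m) (Fin m) ℝ)) *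
      (Matrix.fromBlocks 0 Y₀ Y₀ᵀ 0)).trace
      = 2 * ∑ i : Fin k, ∑ j : Fin m, X₀ i j * Y₀ i j := by
    simp only [Matrix.fromBlocks_multiply, trace_fromBlocks', Matrix.mul_zero, Matrix.zero_mul,
      add_zero, zero_add]
    simp only [Matrix.trace, Matrix.diag, Matrix.mul_apply, Matrix.transpose_apply]
    rw [Finset.sum_comm (γ := Fin m) (s := (Finset.univ : Finset (Fin m)))]
    ring
  have key : ∀ (i : Fin k) (j : Fin m),
      (1/2 : ℝ) *
        (let Xij : Matrix (Fin k ⊕ Fin m) (Fin k ⊕ Fin m) ℝ :=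
          (Real.sqrt 2 / 2) •
            Matrix.fromBlocks 0 (Matrix.single i j (1 : ℝ))
              (Matrix.single i j (1 : ℝ))ᵀ 0
        (Xij * Xij * (Matrix.fromBlocks 0 X₀ X₀ᵀ 0) * (Matrix.fromBlocks 0 Y₀ Y₀ᵀ 0) -
          (Matrix.fromBlocks 0 X₀ X₀ᵀ 0) * Xij * (Matrix.fromBlocks 0 Y₀ Y₀ᵀ 0) * Xij).trace)
      = (1:ℝ)/4 * ((∑ j' : Fin m, X₀ i j' * Y₀ i j') + (∑ i' : Fin k, X₀ i' j * Y₀ i' j)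
          - 2 * (X₀ i j * Y₀ i j)) := by
    intro i j
    dsimp only
    simp only [Matrix.smul_mul, Matrix.mul_smul, smul_smul]
    rw [← smul_sub, Matrix.trace_smul, smul_eq_mul, hc, Matrix.trace_sub, trace1', trace2']
    have e1 : (X₀ * Y₀ᵀ) i i = ∑ j' : Fin m, X₀ i j' * Y₀ i j' := by
      simp [Matrix.mul_apply]
    have e2 : (X₀ᵀ * Y₀) j j = ∑ i' : Fin k, X₀ i' j * Y₀ i' j := by
      simp [Matrix.mul_apply]
    rw [e1, e2]
    ring
  calc (∑ i : Fin k, ∑ j : Fin m, _) = ∑ i : Fin k, ∑ j : Fin m,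
      ((1:ℝ)/4 * ((∑ j' : Fin m, X₀ i j' * Y₀ i j') + (∑ i' : Fin k, X₀ i' j * Y₀ i' j)
          - 2 * (X₀ i j * Y₀ i j))) :=
        Finset.sum_congr rfl fun i _ => Finset.sum_congr rfl fun j _ => key i j
    _ = (((k : ℝ) + m - 2) / 8) * (2 * ∑ i : Fin k, ∑ j : Fin m, X₀ i j * Y₀ i j) :=
        sum_helper k m _
    _ = _ := by rw [hRHS]
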